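/- arXiv:2306.12887 — 2 statements merged into one kernel-verified Lean document; each statement's English description precedes it below -/
import Mathlib

section
/- Let S be a set of places of Q, F a number field, and T = M_F(S) the set of places of F over S. Then the restriction map ρ : J*(Q,S) → J*(F,T), ρ(c) = c restricted to J(F,T), is a vector space isomorphism between the spaces of consistent maps. Its inverse is given by [ρ^{-1}(c)](K,v) = Σ_{w|v} c(L,w) for any number field L containing both K and F. -/
/-- An abstract model of the collection of all number fields inside a fixed algebraic
closure `Q̄` of `ℚ`, ordered by inclusion `le`, together with, for each number field
`K`, its set `Pl K` of places and the restriction maps `res K L : Pl L → Pl K` sending a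
place of `L ⊇ K` to the place of `K` below it (with finite fibers). -/
structure NumberFields where
  NF : Type
  le : NF → NF → Prop
  le_refl : ∀ K, le K K
  le_trans : ∀ {K L M}, le K L → le L M → le K M
  Q : NF
  Q_le : ∀ K, le Q K
  directed : ∀ K L, ∃ M, le K M ∧ le L M
  Pl : NF → Type
  res : ∀ (K L : NF), Pl L → Pl K
  res_refl : ∀ K (v : Pl K), res K K v = v
  res_trans : ∀ {K L M}, le K L → le L M → ∀ x : Pl M, res K L (res L M x) = res K M x
  fiber_finite : ∀ {K L}, le K L → ∀ v : Pl K, {w : Pl L | res K L w = v}.Finite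
  fiber_nonempty : ∀ {K L}, le K L → ∀ v : Pl K, ∃ w : Pl L, res K L w = v

namespace NumberFields

variable (P : NumberFields)

/-- `M_K(S)`: for a set `S` of places of `F` and a finite extension `K/F`, the set of
places of `K` dividing a place in `S`. -/
def MK (F : P.NF) (S : Set (P.Pl F)) (K : P.NF) : Set (P.Pl K) := {v | P.res F K v ∈ S}

/-- `(K,v) ∈ J(F,S)`: `K` is a finite extension of `F` and `v ∈ M_K(S)`. -/
def MemJ (F : P.NF) (S : Set (P.Pl F)) (K : P.NF) (v : P.Pl K) : Prop :=
  P.le F K ∧ P.res F K v ∈ S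

/-- The index set `J(F,S) = {(K,v) : K a finite extension of F, v ∈ M_K(S)}`. -/
def JT (F : P.NF) (S : Set (P.Pl F)) : Type :=
  {p : Σ K : P.NF, P.Pl K // P.MemJ F S p.1 p.2}

theorem liftJ {F : P.NF} {S : Set (P.Pl F)} {K L : P.NF} {v : P.Pl K}
    (m : P.MemJ F S K v) (h : P.le K L) {w : P.Pl L} (hw : P.res K L w = v) :
    P.MemJ F S L w := by
  refine ⟨P.le_trans m.1 h, ?_⟩
  rw [← P.res_trans m.1 h, hw]
  exact m.2

/-- A map `c : J(F,S) → ℝ` is consistent if `c(K,v) = Σ_{w∣v} c(L,w)` for all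
`(K,v) ∈ J(F,S)` and all finite extensions `L/K`. -/
def ConsistentJ (F : P.NF) (S : Set (P.Pl F)) (c : P.JT F S → ℝ) : Prop :=
  ∀ (K : P.NF) (v : P.Pl K) (m : P.MemJ F S K v) (L : P.NF) (h : P.le K L),
    c ⟨⟨K, v⟩, m⟩ = ∑ᶠ w : {w : P.Pl L // P.res K L w = v}, c ⟨⟨L, w.1⟩, P.liftJ m h w.2⟩

/-- The space `J^*(F,S)` of consistent maps on `J(F,S)`. -/
def ConsistentJSub (F : P.NF) (S : Set (P.Pl F)) : Submodule ℝ (P.JT F S → ℝ) where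
  carrier := {c | P.ConsistentJ F S c}
  add_mem' := by
    intro c d hc hd K v m L h
    haveI : Finite {w : P.Pl L // P.res K L w = v} := (P.fiber_finite h v).to_subtype
    show c ⟨⟨K, v⟩, m⟩ + d ⟨⟨K, v⟩, m⟩ = _
    rw [hc K v m L h, hd K v m L h,
      ← finsum_add_distrib (Set.finite_univ.subset (Set.subset_univ _))
        (Set.finite_univ.subset (Set.subset_univ _))]
    rfl
  zero_mem' := by
    intro K v m L h
    show (0 : ℝ) = ∑ᶠ _ : {w : P.Pl L // P.res K L w = v}, (0 : ℝ)
    simp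
  smul_mem' := by
    intro r c hc K v m L h
    haveI : Finite {w : P.Pl L // P.res K L w = v} := (P.fiber_finite h v).to_subtype
    show r * c ⟨⟨K, v⟩, m⟩ = _
    rw [hc K v m L h, mul_finsum _ _]
    rfl

theorem memJ_of_memJT {S : Set (P.Pl P.Q)} {F K : P.NF} {v : P.Pl K}
    (m : P.MemJ F (P.MK P.Q S F) K v) : P.MemJ P.Q S K v := by
  refine ⟨P.Q_le K, ?_⟩
  have : P.res P.Q F (P.res F K v) ∈ S := m.2
  rwa [P.res_trans (P.Q_le F) m.1] at this

theorem memJT_of_above {S : Set (P.Pl P.Q)} {F K L : P.NF} {v : P.Pl K}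
    (m : P.MemJ P.Q S K v) (hKL : P.le K L) (hFL : P.le F L) {w : P.Pl L}
    (hw : P.res K L w = v) : P.MemJ F (P.MK P.Q S F) L w := by
  refine ⟨hFL, ?_⟩
  show P.res P.Q F (P.res F L w) ∈ S
  rw [P.res_trans (P.Q_le F) hFL, ← P.res_trans m.1 hKL, hw]
  exact m.2

section Aux

variable {P : NumberFields}

/-- The fiber over `v` in `M` decomposes as a disjoint union of the fibers over the
places of an intermediate field `L`. -/
def fiberEquiv {K L M : P.NF} (hKL : P.le K L) (hLM : P.le L M) (v : P.Pl K) :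
    (Σ w : {w : P.Pl L // P.res K L w = v}, {x : P.Pl M // P.res L M x = w.1}) ≃
      {x : P.Pl M // P.res K M x = v} where
  toFun p := ⟨p.2.1, by rw [← P.res_trans hKL hLM, p.2.2, p.1.2]⟩
  invFun x := ⟨⟨P.res L M x.1, by rw [P.res_trans hKL hLM, x.2]⟩, ⟨x.1, rfl⟩⟩
  left_inv := by
    rintro ⟨⟨w, hw⟩, x, hx⟩
    dsimp only at hx
    subst hx
    rfl
  right_inv x := rfl

theorem finsum_fiber_sigma {K L M : P.NF} (hKL : P.le K L) (hLM : P.le L M) (v : P.Pl K)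
    (g : {x : P.Pl M // P.res K M x = v} → ℝ) :
    ∑ᶠ x, g x =
      ∑ᶠ w : {w : P.Pl L // P.res K L w = v},
        ∑ᶠ x : {x : P.Pl M // P.res L M x = w.1},
          g ⟨x.1, by rw [← P.res_trans hKL hLM, x.2, w.2]⟩ := by
  haveI : Finite {w : P.Pl L // P.res K L w = v} := (P.fiber_finite hKL v).to_subtype
  haveI : ∀ w : {w : P.Pl L // P.res K L w = v},
      Finite {x : P.Pl M // P.res L M x = w.1} :=
    fun w => (P.fiber_finite hLM w.1).to_subtype
  haveI : Finite {x : P.Pl M // P.res K M x = v} :=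
    (P.fiber_finite (P.le_trans hKL hLM) v).to_subtype
  letI : Fintype {w : P.Pl L // P.res K L w = v} := Fintype.ofFinite _
  letI : ∀ w : {w : P.Pl L // P.res K L w = v},
      Fintype {x : P.Pl M // P.res L M x = w.1} := fun w => Fintype.ofFinite _
  letI : Fintype {x : P.Pl M // P.res K M x = v} := Fintype.ofFinite _
  rw [finsum_eq_sum_of_fintype, finsum_eq_sum_of_fintype]
  simp only [finsum_eq_sum_of_fintype]
  rw [← Equiv.sum_comp (fiberEquiv hKL hLM v) g, ← Finset.univ_sigma_univ,
    Finset.sum_sigma]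
  rfl

end Aux

section Aux2

variable {P : NumberFields}

theorem sum_fiber_step {F : P.NF} {T : Set (P.Pl F)} {c : P.JT F T → ℝ}
    (hc : P.ConsistentJ F T c) {K L M : P.NF} (hKL : P.le K L) (hLM : P.le L M)
    (v : P.Pl K)
    (mL : ∀ w : P.Pl L, P.res K L w = v → P.MemJ F T L w)
    (mM : ∀ x : P.Pl M, P.res K M x = v → P.MemJ F T M x) :
    (∑ᶠ w : {w : P.Pl L // P.res K L w = v}, c ⟨⟨L, w.1⟩, mL w.1 w.2⟩) =
      ∑ᶠ x : {x : P.Pl M // P.res K M x = v}, c ⟨⟨M, x.1⟩, mM x.1 x.2⟩ := by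
  rw [finsum_fiber_sigma hKL hLM v (fun x => c ⟨⟨M, x.1⟩, mM x.1 x.2⟩)]
  apply finsum_congr
  intro w
  rw [hc L w.1 (mL w.1 w.2) M hLM]

theorem sum_indep {F : P.NF} {T : Set (P.Pl F)} {c : P.JT F T → ℝ}
    (hc : P.ConsistentJ F T c) {K L L' : P.NF} (hKL : P.le K L) (hKL' : P.le K L')
    (v : P.Pl K)
    (mL : ∀ w : P.Pl L, P.res K L w = v → P.MemJ F T L w)
    (mL' : ∀ w : P.Pl L', P.res K L' w = v → P.MemJ F T L' w) :
    (∑ᶠ w : {w : P.Pl L // P.res K L w = v}, c ⟨⟨L, w.1⟩, mL w.1 w.2⟩) =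
      ∑ᶠ w : {w : P.Pl L' // P.res K L' w = v}, c ⟨⟨L', w.1⟩, mL' w.1 w.2⟩ := by
  obtain ⟨M, hLM, hL'M⟩ := P.directed L L'
  have mM : ∀ x : P.Pl M, P.res K M x = v → P.MemJ F T M x := fun x hx =>
    P.liftJ (mL (P.res L M x) (by rw [P.res_trans hKL hLM]; exact hx)) hLM rfl
  rw [sum_fiber_step hc hKL hLM v mL mM, sum_fiber_step hc hKL' hL'M v mL' mM]

/-- The extension map `ρ⁻¹`, defined using a choice of a field containing both `K` and
`F`. -/
noncomputable def extMap (F : P.NF) (S : Set (P.Pl P.Q)) (c : P.JT F (P.MK P.Q S F) → ℝ) :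
    P.JT P.Q S → ℝ := fun j =>
  ∑ᶠ w : {w : P.Pl (P.directed j.1.1 F).choose //
      P.res j.1.1 (P.directed j.1.1 F).choose w = j.1.2},
    c ⟨⟨_, w.1⟩, P.memJT_of_above j.2 (P.directed j.1.1 F).choose_spec.1
        (P.directed j.1.1 F).choose_spec.2 w.2⟩

theorem extMap_eq {F : P.NF} {S : Set (P.Pl P.Q)} {c : P.JT F (P.MK P.Q S F) → ℝ}
    (hc : P.ConsistentJ F (P.MK P.Q S F) c) {K : P.NF} {v : P.Pl K}
    (m : P.MemJ P.Q S K v) {L : P.NF} (hKL : P.le K L) (hFL : P.le F L) :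
    extMap F S c ⟨⟨K, v⟩, m⟩ =
      ∑ᶠ w : {w : P.Pl L // P.res K L w = v},
        c ⟨⟨L, w.1⟩, P.memJT_of_above m hKL hFL w.2⟩ := by
  unfold extMap
  dsimp only
  exact sum_indep hc (P.directed K F).choose_spec.1 hKL v
    (fun w hw => P.memJT_of_above m (P.directed K F).choose_spec.1
      (P.directed K F).choose_spec.2 hw)
    (fun w hw => P.memJT_of_above m hKL hFL hw)

theorem extMap_consistent {F : P.NF} {S : Set (P.Pl P.Q)}
    {c : P.JT F (P.MK P.Q S F) → ℝ} (hc : P.ConsistentJ F (P.MK P.Q S F) c) :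
    P.ConsistentJ P.Q S (extMap F S c) := by
  intro K v m K' h
  obtain ⟨M, hK'M, hFM⟩ := P.directed K' F
  have hKM : P.le K M := P.le_trans h hK'M
  rw [extMap_eq hc m hKM hFM]
  have step : ∀ w : {w : P.Pl K' // P.res K K' w = v},
      extMap F S c ⟨⟨K', w.1⟩, P.liftJ m h w.2⟩ =
        ∑ᶠ x : {x : P.Pl M // P.res K' M x = w.1},
          c ⟨⟨M, x.1⟩, P.memJT_of_above (P.liftJ m h w.2) hK'M hFM x.2⟩ :=
    fun w => extMap_eq hc _ hK'M hFM
  rw [finsum_congr step]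
  exact finsum_fiber_sigma h hK'M v
    (fun x => c ⟨⟨M, x.1⟩, P.memJT_of_above m hKM hFM x.2⟩)

theorem restrict_consistent {S : Set (P.Pl P.Q)} {F : P.NF} {c : P.JT P.Q S → ℝ}
    (hc : P.ConsistentJ P.Q S c) :
    P.ConsistentJ F (P.MK P.Q S F) (fun j => c ⟨j.1, P.memJ_of_memJT j.2⟩) := by
  intro K v m L h
  exact hc K v (P.memJ_of_memJT m) L h

end Aux2


/-- for `S` a set of places of `ℚ`, `F` a number field and
`T = M_F(S)`, the restriction map `ρ : J^*(ℚ,S) → J^*(F,T)` is a vector space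
isomorphism, with inverse `[ρ⁻¹(c)](K,v) = Σ_{w∣v} c(L,w)` for any number field `L`
containing both `K` and `F`. -/
theorem stmt13 (S : Set (P.Pl P.Q)) (F : P.NF) :
    ∃ e : P.ConsistentJSub P.Q S ≃ₗ[ℝ] P.ConsistentJSub F (P.MK P.Q S F),
      (∀ (c : P.ConsistentJSub P.Q S) (j : P.JT F (P.MK P.Q S F)),
        (e c).1 j = c.1 ⟨j.1, P.memJ_of_memJT j.2⟩) ∧
      (∀ (c : P.ConsistentJSub F (P.MK P.Q S F)) (K : P.NF) (v : P.Pl K)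
          (m : P.MemJ P.Q S K v) (L : P.NF) (hKL : P.le K L) (hFL : P.le F L),
        (e.symm c).1 ⟨⟨K, v⟩, m⟩ =
          ∑ᶠ w : {w : P.Pl L // P.res K L w = v},
            c.1 ⟨⟨L, w.1⟩, P.memJT_of_above m hKL hFL w.2⟩) := by
  refine ⟨{ toFun := fun c => ⟨fun j => c.1 ⟨j.1, P.memJ_of_memJT j.2⟩,
              restrict_consistent (show P.ConsistentJ P.Q S c.1 from c.2)⟩
            invFun := fun c => ⟨extMap F S c.1,
              extMap_consistent (show P.ConsistentJ F (P.MK P.Q S F) c.1 from c.2)⟩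
            map_add' := fun c d => rfl
            map_smul' := fun r c => rfl
            left_inv := ?_
            right_inv := ?_ }, fun c j => rfl, ?_⟩
  · intro c
    apply Subtype.ext
    funext j
    obtain ⟨⟨K, v⟩, m⟩ := j
    have hc : P.ConsistentJ P.Q S c.1 := c.2
    show extMap F S (fun j => c.1 ⟨j.1, P.memJ_of_memJT j.2⟩) ⟨⟨K, v⟩, m⟩ = _
    rw [extMap_eq (restrict_consistent hc) m (P.directed K F).choose_spec.1
      (P.directed K F).choose_spec.2]
    exact (hc K v m _ (P.directed K F).choose_spec.1).symm
  · intro c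
    apply Subtype.ext
    funext j
    obtain ⟨⟨K, v⟩, m⟩ := j
    have hc : P.ConsistentJ F (P.MK P.Q S F) c.1 := c.2
    show extMap F S c.1 ⟨⟨K, v⟩, P.memJ_of_memJT m⟩ = _
    rw [extMap_eq hc (P.memJ_of_memJT m) (P.directed K F).choose_spec.1
      (P.directed K F).choose_spec.2]
    exact (hc K v m _ (P.directed K F).choose_spec.1).symm
  · intro c K v m L hKL hFL
    have hc : P.ConsistentJ F (P.MK P.Q S F) c.1 := c.2
    show extMap F S c.1 ⟨⟨K, v⟩, m⟩ = _
    exact extMap_eq hc m hKL hFL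


end NumberFields
end

section
/- If S is a proper subset of the places of Q (so X ⊊ Y), then the Q-linear space F = {f_α : α ∈ Q̄^×}, where f_α(x) = log‖α‖_x, is dense in LC_c(X) with respect to the L^1(λ) norm; whereas if S is the full set of places of Q, then F is dense in the subspace L_0 of λ-integral-zero functions. -/
open MeasureTheory

/-- An abstract model of the Allcock–Vaaler space `Y` of all places of `Q̄` with its
measure `λ = μ`, partitioned into the sets `Y(ℚ,p) = YQ p` over the places `p` of `ℚ`,
together with the functions `f_α = (y ↦ log ‖α‖_y)` for `α ∈ Q̄^× = Alg`.  Each `f_α` is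
locally constant with compact support and, by the product formula, has `λ`-integral
zero; the axiom `dense_AV` is the Allcock–Vaaler theorem that `α ↦ f_α` has dense image
in the integral-zero subspace of `L¹(Y,λ)`. -/
structure AVSystem (Y : Type) [TopologicalSpace Y] [MeasurableSpace Y] where
  μ : Measure Y
  PlQ : Type
  YQ : PlQ → Set Y
  YQ_nonempty : ∀ p, (YQ p).Nonempty
  YQ_disjoint : ∀ p q, p ≠ q → Disjoint (YQ p) (YQ q)
  YQ_cover : ⋃ p, YQ p = Set.univ
  YQ_measurable : ∀ p, MeasurableSet (YQ p)
  YQ_isOpen : ∀ p, IsOpen (YQ p)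
  YQ_isCompact : ∀ p, IsCompact (YQ p)
  μ_YQ : ∀ p, μ (YQ p) = 1
  Alg : Type
  falg : Alg → Y → ℝ
  falg_lc : ∀ α, IsLocallyConstant (falg α)
  falg_supp : ∀ α, HasCompactSupport (falg α)
  falg_integrable : ∀ α, Integrable (falg α) μ
  falg_integral_zero : ∀ α, ∫ y, falg α y ∂μ = 0
  dense_AV : ∀ g : Y → ℝ, Integrable g μ → (∫ y, g y ∂μ) = 0 →
    ∀ ε > 0, ∃ α, (∫ y, |falg α y - g y| ∂μ) < ε

/-- let `X = ⋃_{p ∈ S} Y(ℚ,p)` be the set of places over `S` and let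
`F = {f_α : α ∈ Q̄^×}`.  If `S` is a proper subset of the places of `ℚ` (so `X ⊊ Y`),
then `F` is dense, for the `L¹(λ)` norm on `X`, in the space of locally constant
compactly supported functions supported on `X`; if `S` is the full set of places, then
`F` is dense in the subspace `L₀` of such functions with `λ`-integral zero. -/
theorem stmt18 {Y : Type} [TopologicalSpace Y] [MeasurableSpace Y] [BorelSpace Y]
    (A : AVSystem Y) (S : Set A.PlQ) (g : Y → ℝ)
    (hlc : IsLocallyConstant g) (hcs : HasCompactSupport g)
    (hsupp : ∀ y : Y, g y ≠ 0 → y ∈ ⋃ p ∈ S, A.YQ p) :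
    (S ≠ Set.univ → ∀ ε > 0, ∃ α : A.Alg,
      (∫ y in ⋃ p ∈ S, A.YQ p, |A.falg α y - g y| ∂A.μ) < ε) ∧
    (S = Set.univ → (∫ y in ⋃ p ∈ S, A.YQ p, g y ∂A.μ) = 0 → ∀ ε > 0, ∃ α : A.Alg,
      (∫ y in ⋃ p ∈ S, A.YQ p, |A.falg α y - g y| ∂A.μ) < ε) := by
  classical
  set X : Set Y := ⋃ p ∈ S, A.YQ p with hX
  have hXopen : IsOpen X := isOpen_biUnion fun p _ => A.YQ_isOpen p
  have hXmeas : MeasurableSet X := hXopen.measurableSet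
  haveI : IsFiniteMeasureOnCompacts A.μ := by
    constructor
    intro K hK
    obtain ⟨t, ht⟩ := hK.elim_finite_subcover A.YQ A.YQ_isOpen
      (by rw [A.YQ_cover]; exact Set.subset_univ K)
    calc A.μ K ≤ A.μ (⋃ p ∈ t, A.YQ p) := measure_mono ht
      _ ≤ ∑ p ∈ t, A.μ (A.YQ p) := measure_biUnion_finset_le t A.YQ
      _ = ∑ _p ∈ t, 1 := by simp [A.μ_YQ]
      _ < ⊤ := by simp
  have hg : Integrable g A.μ := hlc.continuous.integrable_of_hasCompactSupport hcs
  constructor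
  · intro hS ε hε
    obtain ⟨p₀, hp₀⟩ : ∃ p₀, p₀ ∉ S := by
      by_contra h
      push_neg at h
      exact hS (Set.eq_univ_of_forall h)
    set c : ℝ := ∫ y, g y ∂A.μ with hc
    set h : Y → ℝ := fun y => g y - (A.YQ p₀).indicator (fun _ => c) y with hh
    have hind : Integrable ((A.YQ p₀).indicator (fun _ => c)) A.μ := by
      rw [integrable_indicator_iff (A.YQ_measurable p₀)]
      exact integrableOn_const (by rw [A.μ_YQ]; exact ENNReal.one_ne_top)
    have hhint : Integrable h A.μ := hg.sub hind
    have hhzero : (∫ y, h y ∂A.μ) = 0 := by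
      rw [integral_sub hg hind, integral_indicator (A.YQ_measurable p₀),
        setIntegral_const, measureReal_def, A.μ_YQ]
      simp [hc]
    obtain ⟨α, hα⟩ := A.dense_AV h hhint hhzero ε hε
    refine ⟨α, ?_⟩
    have heq : Set.EqOn (fun y => |A.falg α y - g y|) (fun y => |A.falg α y - h y|) X := by
      intro y hy
      have : (A.YQ p₀).indicator (fun _ => c) y = 0 := by
        apply Set.indicator_of_notMem
        intro hy0
        obtain ⟨p, hpS, hyp⟩ := Set.mem_iUnion₂.1 hy
        have hne : p ≠ p₀ := fun e => hp₀ (e ▸ hpS)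
        exact (A.YQ_disjoint p p₀ hne).ne_of_mem hyp hy0 rfl
      simp [hh, this]
    calc (∫ y in X, |A.falg α y - g y| ∂A.μ)
        = ∫ y in X, |A.falg α y - h y| ∂A.μ := setIntegral_congr_fun hXmeas heq
      _ ≤ ∫ y, |A.falg α y - h y| ∂A.μ :=
          setIntegral_le_integral ((A.falg_integrable α).sub hhint).abs
            (Filter.Eventually.of_forall fun y => abs_nonneg _)
      _ < ε := hα
  · intro hS hzero ε hε
    have hXuniv : X = Set.univ := by
      rw [hX, hS, Set.biUnion_univ, A.YQ_cover]
    rw [hXuniv, Measure.restrict_univ] at hzero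
    obtain ⟨α, hα⟩ := A.dense_AV g hg hzero ε hε
    refine ⟨α, ?_⟩
    rw [hXuniv, Measure.restrict_univ]
    exact hα
end
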